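/- Let X̄ be a real symmetric positive definite n×n matrix with λ_max(X̄) ≤ 1, and let Ū be a positive semidefinite matrix with trace(Ū) = n and trace(X̄ Ū) = n. Then for every positive definite X with λ_max(X) ≤ 1 and trace((Ū - X̄⁻¹) X) = 0, we have det(X) ≤ det(X̄). -/

import Mathlib

open Matrix
open scoped MatrixOrder

-- PSD matrices have nonneg trace
lemma psd_trace_nonneg {n : ℕ} {M : Matrix (Fin n) (Fin n) ℝ} (hM : M.PosSemidef) :
    0 ≤ M.trace := by
  rw [Matrix.trace]
  refine Finset.sum_nonneg fun i _ => ?_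
  exact hM.diag_nonneg

-- trace of product of PSD matrices is nonneg
lemma psd_trace_mul_nonneg {n : ℕ} {A B : Matrix (Fin n) (Fin n) ℝ}
    (hA : A.PosSemidef) (hB : B.PosSemidef) : 0 ≤ (A * B).trace := by
  have hS : (CFC.sqrt A).PosSemidef := (CFC.sqrt_nonneg A).posSemidef
  have hSS : CFC.sqrt A * CFC.sqrt A = A := CFC.sqrt_mul_sqrt_self A hA.nonneg
  have h1 : (CFC.sqrt A * B * CFC.sqrt A).PosSemidef := by
    have := hB.conjTranspose_mul_mul_same (CFC.sqrt A)
    rwa [hS.1] at this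
  have h2 : (CFC.sqrt A * B * CFC.sqrt A).trace = (A * B).trace := by
    rw [Matrix.trace_mul_cycle, hSS]
  rw [← h2]
  exact psd_trace_nonneg h1

-- trace of a hermitian real matrix is sum of eigenvalues
lemma trace_eq_sum_eigenvalues {n : ℕ} {M : Matrix (Fin n) (Fin n) ℝ} (hM : M.IsHermitian) :
    M.trace = ∑ i, hM.eigenvalues i := by
  conv_lhs => rw [hM.spectral_theorem]
  rw [Unitary.conjStarAlgAut_apply, Matrix.trace_mul_cycle]
  have : (star (hM.eigenvectorUnitary : Matrix (Fin n) (Fin n) ℝ)) *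
      (hM.eigenvectorUnitary : Matrix (Fin n) (Fin n) ℝ) = 1 := by
    exact Matrix.mem_unitaryGroup_iff'.mp hM.eigenvectorUnitary.2
  rw [this, Matrix.one_mul, Matrix.trace_diagonal]
  simp

-- AM-GM consequence
lemma prod_le_one_of_sum_le {n : ℕ} (z : Fin n → ℝ) (hz : ∀ i, 0 ≤ z i)
    (h : ∑ i, z i ≤ n) : ∏ i, z i ≤ 1 := by
  rcases Nat.eq_zero_or_pos n with hn | hn
  · subst hn; simp
  have hn' : (0:ℝ) < n := by exact_mod_cast hn
  have key := Real.geom_mean_le_arith_mean_weighted Finset.univ (fun _ => 1 / (n:ℝ)) z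
    (fun i _ => by positivity)
    (by simp [Finset.sum_const, Finset.card_univ]; field_simp)
    (fun i _ => hz i)
  have hsum : ∑ i, (1 / (n:ℝ)) * z i ≤ 1 := by
    rw [← Finset.mul_sum]
    rw [div_mul_eq_mul_div, one_mul, div_le_one hn']
    exact h
  have hprod : ∏ i, z i ^ (1 / (n:ℝ)) = (∏ i, z i) ^ (1 / (n:ℝ)) := by
    rw [← Real.finset_prod_rpow _ _ (fun i _ => hz i)]
  have h1 : (∏ i, z i) ^ (1 / (n:ℝ)) ≤ 1 := by
    rw [← hprod]; exact key.trans hsum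
  have hp0 : 0 ≤ ∏ i, z i := Finset.prod_nonneg fun i _ => hz i
  have h2 : (∏ i, z i) ^ ((1 / (n:ℝ)) * n) ≤ 1 := by
    rw [Real.rpow_mul hp0]
    exact Real.rpow_le_one (Real.rpow_nonneg hp0 _) h1 hn'.le
  rwa [one_div, inv_mul_cancel₀ (ne_of_gt hn'), Real.rpow_one] at h2

theorem stmt_16 {n : ℕ} (Xb Ub X : Matrix (Fin n) (Fin n) ℝ)
    (hXb : Xb.PosDef) (hUb : Ub.PosSemidef) (hX : X.PosDef)
    (hXbmax : ⨆ i : Fin n, hXb.1.eigenvalues i ≤ 1)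
    (hUbtr : Ub.trace = n)
    (htr : (Xb * Ub).trace = n)
    (hXmax : ⨆ i : Fin n, hX.1.eigenvalues i ≤ 1)
    (horth : ((Ub - Xb⁻¹) * X).trace = 0) :
    X.det ≤ Xb.det := by
  have hA : (Xb⁻¹).PosDef := hXb.inv
  set S := CFC.sqrt (Xb⁻¹) with hSdef
  have hSps : S.PosSemidef := (CFC.sqrt_nonneg _).posSemidef
  have hSS : S * S = Xb⁻¹ := CFC.sqrt_mul_sqrt_self _ hA.posSemidef.nonneg
  -- 1 - X is PSD
  have hIX : (1 - X : Matrix (Fin n) (Fin n) ℝ).PosSemidef := by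
    have hspec := hX.1.spectral_theorem
    rw [Unitary.conjStarAlgAut_apply] at hspec
    set V := (hX.1.eigenvectorUnitary : Matrix (Fin n) (Fin n) ℝ) with hV
    have hVV : V * star V = 1 := Matrix.mem_unitaryGroup_iff.mp hX.1.eigenvectorUnitary.2
    have heq : (1 - X : Matrix (Fin n) (Fin n) ℝ)
        = V * diagonal (fun i => 1 - hX.1.eigenvalues i) * star V := by
      have : (diagonal (fun i => 1 - hX.1.eigenvalues i) : Matrix (Fin n) (Fin n) ℝ)
          = 1 - diagonal (RCLike.ofReal ∘ hX.1.eigenvalues) := by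
        rw [← Matrix.diagonal_one, ← Matrix.diagonal_sub]
        rfl
      rw [this, Matrix.mul_sub, Matrix.mul_one, Matrix.sub_mul, hVV, ← hspec]
    have hd : (diagonal (fun i => 1 - hX.1.eigenvalues i) :
        Matrix (Fin n) (Fin n) ℝ).PosSemidef := by
      refine Matrix.posSemidef_diagonal_iff.mpr fun i => ?_
      have : hX.1.eigenvalues i ≤ ⨆ j, hX.1.eigenvalues j :=
        le_ciSup (Set.Finite.bddAbove (Set.finite_range _)) i
      linarith [this.trans hXmax]
    have h := hd.mul_mul_conjTranspose_same V
    rw [← Matrix.star_eq_conjTranspose] at h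
    rw [heq]
    exact h
  -- trace (Xb⁻¹ * X) ≤ n
  have htrX : (Xb⁻¹ * X).trace ≤ n := by
    have h1 : (Ub * X).trace = (Xb⁻¹ * X).trace := by
      have := horth
      rw [Matrix.sub_mul, Matrix.trace_sub, sub_eq_zero] at this
      exact this
    have h2 : 0 ≤ (Ub * (1 - X)).trace := psd_trace_mul_nonneg hUb hIX
    rw [Matrix.mul_sub, Matrix.mul_one, Matrix.trace_sub, hUbtr, sub_nonneg] at h2
    linarith [h1 ▸ h2]
  -- N := S * X * S is PSD with trace = trace (Xb⁻¹ X) and det = det X / det Xb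
  have hN : (S * X * S).PosSemidef := by
    have := hX.posSemidef.mul_mul_conjTranspose_same S
    rwa [hSps.1] at this
  have hNtr : (S * X * S).trace = (Xb⁻¹ * X).trace := by
    rw [Matrix.trace_mul_cycle, hSS]
  have hNdet : (S * X * S).det = Xb⁻¹.det * X.det := by
    rw [Matrix.det_mul, Matrix.det_mul, ← hSS, Matrix.det_mul]; ring
  -- eigenvalues of N
  have hzn : ∀ i, 0 ≤ hN.1.eigenvalues i := hN.eigenvalues_nonneg
  have hzs : ∑ i, hN.1.eigenvalues i ≤ n := by
    rw [← trace_eq_sum_eigenvalues hN.1, hNtr]; exact htrX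
  have hzp : ∏ i, hN.1.eigenvalues i ≤ 1 := prod_le_one_of_sum_le _ hzn hzs
  have hdet : (S * X * S).det = ∏ i, hN.1.eigenvalues i := by
    rw [hN.1.det_eq_prod_eigenvalues]; norm_num
  have hXbdet : 0 < Xb.det := hXb.det_pos
  have : Xb⁻¹.det * X.det ≤ 1 := by rw [← hNdet, hdet]; exact hzp
  rw [Matrix.det_nonsing_inv, Ring.inverse_eq_inv'] at this
  calc X.det = Xb.det * (Xb.det⁻¹ * X.det) := by field_simp
    _ ≤ Xb.det * 1 := by nlinarith
    _ = Xb.det := mul_one _
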